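/- Let φ be a smooth function on [0,∞) with φ(0) = φ'(0) = 0, φ''(t) ≥ 0 and φ'''(t) ≥ 0 for all t ≥ 0. Then for all 0 ≤ q < p, φ(q) − φ(p) − φ'(p)(q − p) ≥ φ''((p+q)/2) · ((p−q)/2)². -/

import Mathlib

open Set Filter Topology

private lemma hasDerivAt_of_pos' {f : ℝ → ℝ} (hf : DifferentiableOn ℝ f (Set.Ici 0))
    {t : ℝ} (ht : 0 < t) : HasDerivAt f (derivWithin f (Set.Ici 0) t) t := by
  have hn : Set.Ici (0:ℝ) ∈ 𝓝 t := Ici_mem_nhds ht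
  have hd := (hf t ht.le).differentiableAt hn
  rw [derivWithin_of_mem_nhds hn]
  exact hd.hasDerivAt

theorem stmt_3 (φ : ℝ → ℝ)
    (hφ : ContDiffOn ℝ 3 φ (Set.Ici 0))
    (h0 : φ 0 = 0) (h0' : derivWithin φ (Set.Ici 0) 0 = 0)
    (hφ'' : ∀ t : ℝ, 0 ≤ t →
      0 ≤ derivWithin (derivWithin φ (Set.Ici 0)) (Set.Ici 0) t)
    (hφ''' : ∀ t : ℝ, 0 ≤ t →
      0 ≤ derivWithin (derivWithin (derivWithin φ (Set.Ici 0)) (Set.Ici 0))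
            (Set.Ici 0) t)
    (p q : ℝ) (hq : 0 ≤ q) (hqp : q < p) :
    φ q - φ p - derivWithin φ (Set.Ici 0) p * (q - p) ≥
      derivWithin (derivWithin φ (Set.Ici 0)) (Set.Ici 0) ((p + q) / 2) *
        ((p - q) / 2) ^ 2 := by
  set f1 := derivWithin φ (Set.Ici 0) with hf1
  set f2 := derivWithin f1 (Set.Ici 0) with hf2
  set f3 := derivWithin f2 (Set.Ici 0) with hf3
  set m := (p + q) / 2 with hm
  set h := (p - q) / 2 with hh
  have hqm : q < m := by rw [hm]; linarith
  have hmp : m < p := by rw [hm]; linarith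
  have hm0 : 0 < m := lt_of_le_of_lt hq hqm
  have hh0 : 0 < h := by rw [hh]; linarith
  have hpm : p - m = h := by rw [hm, hh]; ring
  have hmq : m - q = h := by rw [hm, hh]; ring
  -- regularity
  have hφ1 : ContDiffOn ℝ 2 f1 (Set.Ici 0) :=
    hφ.derivWithin (uniqueDiffOn_Ici 0) (by norm_num)
  have hφ2 : ContDiffOn ℝ 1 f2 (Set.Ici 0) :=
    hφ1.derivWithin (uniqueDiffOn_Ici 0) (by norm_num)
  have dφ : DifferentiableOn ℝ φ (Set.Ici 0) := hφ.differentiableOn (by norm_num)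
  have d1 : DifferentiableOn ℝ f1 (Set.Ici 0) := hφ1.differentiableOn (by norm_num)
  have d2 : DifferentiableOn ℝ f2 (Set.Ici 0) := hφ2.differentiableOn (by norm_num)
  have cφ : ContinuousOn φ (Set.Ici 0) := hφ.continuousOn
  have c1 : ContinuousOn f1 (Set.Ici 0) := hφ1.continuousOn
  have c2 : ContinuousOn f2 (Set.Ici 0) := hφ2.continuousOn
  -- f2 is monotone on Ici 0
  have mono2 : MonotoneOn f2 (Set.Ici 0) := by
    apply monotoneOn_of_deriv_nonneg (convex_Ici 0) c2
    · intro x hx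
      rw [interior_Ici] at hx
      exact ((d2 x (Set.mem_Ici.mpr (le_of_lt (show (0:ℝ) < x from hx)))).differentiableAt (Ici_mem_nhds hx)).differentiableWithinAt
    · intro x hx
      rw [interior_Ici] at hx
      rw [(hasDerivAt_of_pos' d2 hx).deriv]
      exact hφ''' x hx.le
  -- the remainder function
  set H : ℝ → ℝ := fun t => φ q - φ t - f1 t * (q - t) with hH
  have hHd : ∀ t : ℝ, 0 < t → HasDerivAt H (f2 t * (t - q)) t := by
    intro t ht
    have h1 := hasDerivAt_of_pos' dφ ht
    have h2 := hasDerivAt_of_pos' d1 ht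
    have hqt : HasDerivAt (fun s : ℝ => q - s) (-1) t := (hasDerivAt_id t).const_sub q
    have := (h1.const_sub (φ q)).sub (h2.mul hqt)
    refine this.congr_deriv ?_
    rw [← hf1, ← hf2]; ring
  have hHcont : ContinuousOn H (Set.Ici 0) := by
    apply (continuousOn_const.sub cφ).sub (c1.mul (continuousOn_const.sub continuousOn_id))
  -- Step 1: 0 = H q ≤ H m
  have monoH : MonotoneOn H (Set.Icc q m) := by
    apply monotoneOn_of_deriv_nonneg (convex_Icc q m)
      (hHcont.mono (Icc_subset_Ici_iff hqm.le |>.mpr hq))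
    · intro x hx
      rw [interior_Icc] at hx
      have hx0 : 0 < x := lt_of_le_of_lt hq hx.1
      exact ((hHd x hx0).differentiableAt).differentiableWithinAt
    · intro x hx
      rw [interior_Icc] at hx
      have hx0 : 0 < x := lt_of_le_of_lt hq hx.1
      rw [(hHd x hx0).deriv]
      exact mul_nonneg (hφ'' x hx0.le) (by linarith [hx.1])
  have hHq : H q = 0 := by simp [hH]
  have step1 : 0 ≤ H m := by
    have := monoH (by constructor <;> [exact le_refl q; exact hqm.le])
      (by constructor <;> [exact hqm.le; exact le_refl m]) hqm.le
    rw [hHq] at this; exact this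
  -- Step 2: H m + f2 m * h * (p - m) ≤ H p
  set G : ℝ → ℝ := fun t => H t - f2 m * h * (t - m) with hG
  have monoG : MonotoneOn G (Set.Icc m p) := by
    apply monotoneOn_of_deriv_nonneg (convex_Icc m p)
    · exact ((hHcont.mono (Icc_subset_Ici_iff hmp.le |>.mpr hm0.le)).sub
        (continuousOn_const.mul (continuousOn_id.sub continuousOn_const)))
    · intro x hx
      rw [interior_Icc] at hx
      have hx0 : 0 < x := lt_trans hm0 hx.1
      have hd : HasDerivAt G (f2 x * (x - q) - f2 m * h) x := by
        have := (hHd x hx0).sub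
          ((((hasDerivAt_id x).sub_const m)).const_mul (f2 m * h))
        exact this.congr_deriv (by ring)
      exact hd.differentiableAt.differentiableWithinAt
    · intro x hx
      rw [interior_Icc] at hx
      have hx0 : 0 < x := lt_trans hm0 hx.1
      have hd : HasDerivAt G (f2 x * (x - q) - f2 m * h) x := by
        have := (hHd x hx0).sub
          ((((hasDerivAt_id x).sub_const m)).const_mul (f2 m * h))
        exact this.congr_deriv (by ring)
      rw [hd.deriv]
      have hle : f2 m * h ≤ f2 x * (x - q) := by
        apply mul_le_mul (mono2 hm0.le hx0.le hx.1.le) (by linarith [hx.1]) hh0.le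
          (hφ'' x hx0.le)
      linarith
  have step2 : G m ≤ G p := monoG (by constructor <;> [exact le_refl m; exact hmp.le])
    (by constructor <;> [exact hmp.le; exact le_refl p]) hmp.le
  have hGm : G m = H m := by simp [hG]
  have hGp : G p = H p - f2 m * h ^ 2 := by rw [hG]; simp only; rw [hpm]; ring
  have hHp : H p = φ q - φ p - f1 p * (q - p) := rfl
  rw [hGm, hGp, hHp] at step2
  linarith
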